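/- arXiv:2507.19162 — 7 statements merged into one kernel-verified Lean document; each statement's English description precedes it below -/
import Mathlib

section
/- A compact Hausdorff topological semigroup which is algebraically a group is a topological group, i.e., the inversion map x ↦ x⁻¹ is continuous. -/
theorem compact_semigroup_group_has_continuous_inv
    {S : Type*} [Semigroup S] [TopologicalSpace S] [CompactSpace S] [T2Space S]
    [ContinuousMul S]
    (e : S) (he : ∀ x : S, e * x = x ∧ x * e = x)
    (inv : S → S) (hinv : ∀ x : S, x * inv x = e ∧ inv x * x = e) :
    Continuous inv := by
  have huniq : ∀ x y : S, x * y = e → y * x = e → y = inv x := by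
    intro x y h1 h2
    calc y = e * y := (he y).1.symm
      _ = (inv x * x) * y := by rw [(hinv x).2]
      _ = inv x * (x * y) := mul_assoc _ _ _
      _ = inv x * e := by rw [h1]
      _ = inv x := (he (inv x)).2
  rw [continuous_iff_isClosed]
  intro C hC
  have hG : IsClosed {p : S × S | p.1 * p.2 = e ∧ p.2 * p.1 = e ∧ p.2 ∈ C} := by
    refine IsClosed.inter (isClosed_eq (continuous_fst.mul continuous_snd) continuous_const) ?_
    exact IsClosed.inter (isClosed_eq (continuous_snd.mul continuous_fst) continuous_const)
      (hC.preimage continuous_snd)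
  have hcomp : IsCompact {p : S × S | p.1 * p.2 = e ∧ p.2 * p.1 = e ∧ p.2 ∈ C} :=
    hG.isCompact
  have himg : inv ⁻¹' C = Prod.fst '' {p : S × S | p.1 * p.2 = e ∧ p.2 * p.1 = e ∧ p.2 ∈ C} := by
    ext x
    constructor
    · intro hx
      exact ⟨(x, inv x), ⟨(hinv x).1, (hinv x).2, hx⟩, rfl⟩
    · rintro ⟨⟨a, b⟩, ⟨h1, h2, hb⟩, rfl⟩
      have := huniq a b h1 h2
      simpa [Set.mem_preimage, ← this] using hb
  rw [himg]
  exact (hcomp.image continuous_fst).isClosed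
end

section
/- A compact Hausdorff monoid whose only idempotent is the identity is a group: every element has a two-sided inverse. -/
theorem compact_monoid_unique_idempotent_is_group
    {M : Type*} [Monoid M] [TopologicalSpace M] [CompactSpace M] [T2Space M]
    [ContinuousMul M]
    (h : ∀ e : M, e * e = e → e = 1) :
    ∀ x : M, ∃ y : M, x * y = 1 ∧ y * x = 1 := by
  intro x
  set S : Set M := Set.range (fun n : ℕ => x ^ (n + 1)) with hS
  set Γ : Set M := closure S with hΓ
  have hΓcompact : IsCompact Γ := isClosed_closure.isCompact
  have hSmul : ∀ a ∈ S, ∀ b ∈ S, a * b ∈ S := by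
    rintro a ⟨m, rfl⟩ b ⟨n, rfl⟩
    exact ⟨m + 1 + n, by rw [← pow_add]; ring_nf⟩
  have hΓmul : ∀ a ∈ Γ, ∀ b ∈ Γ, a * b ∈ Γ := by
    let s : Subsemigroup M := ⟨S, fun {a b} ha hb => hSmul a ha b hb⟩
    intro a ha b hb
    exact s.topologicalClosure.mul_mem ha hb
  have hΓne : Γ.Nonempty := ⟨x, subset_closure ⟨0, by simp⟩⟩
  obtain ⟨e, heΓ, he⟩ := exists_idempotent_in_compact_subsemigroup
    (fun r => continuous_mul_right r) Γ hΓne hΓcompact hΓmul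
  have h1 : (1 : M) ∈ Γ := by rw [← h e he]; exact heΓ
  by_cases hx1 : x = 1
  · exact ⟨1, by simp [hx1]⟩
  · -- 1 ∈ closure of {x^(n+2)}
    have h1' : (1 : M) ∈ closure (Set.range (fun n : ℕ => x ^ (n + 2))) := by
      have hsub : Γ ⊆ {x} ∪ closure (Set.range fun n : ℕ => x ^ (n + 2)) := by
        apply closure_minimal
        · rintro a ⟨n, rfl⟩
          cases n with
          | zero => exact Or.inl (by simp)
          | succ k => exact Or.inr (subset_closure ⟨k, rfl⟩)
        · exact isClosed_singleton.union isClosed_closure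
      rcases hsub h1 with h' | h'
      · exact absurd h'.symm hx1
      · exact h'
    have himg : closure (Set.range fun n : ℕ => x ^ (n + 2)) ⊆ (fun y => x * y) '' Γ := by
      apply closure_minimal
      · rintro a ⟨n, rfl⟩
        exact ⟨x ^ (n + 1), subset_closure ⟨n, rfl⟩, by simp [← pow_succ']⟩
      · exact (hΓcompact.image (continuous_mul_left x)).isClosed
    obtain ⟨y, hyΓ, hxy⟩ := himg h1'
    have hcomm : x * y = y * x := by
      have : Γ ⊆ {z | x * z = z * x} := by
        apply closure_minimal
        · rintro a ⟨n, rfl⟩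
          simpa using (Commute.self_pow x (n + 1)).eq
        · exact isClosed_eq (continuous_mul_left x) (continuous_mul_right x)
      exact this hyΓ
    exact ⟨y, hxy, by rw [← hcomm]; exact hxy⟩
end

section
/- Swelling Lemma: Let S be a compact Hausdorff topological semigroup and A a nonempty closed subset of S. If t ∈ A and A ⊆ tA, then A = tA. -/
private def spow {S : Type*} [Semigroup S] (t : S) : ℕ → S
  | 0 => t
  | n + 1 => t * spow t n

private theorem spow_mul_spow {S : Type*} [Semigroup S] (t : S) :
    ∀ n m : ℕ, spow t n * spow t m = spow t (n + m + 1)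
  | 0, m => by rw [Nat.zero_add]; rfl
  | n + 1, m => by
    show (t * spow t n) * spow t m = spow t (n + 1 + m + 1)
    rw [mul_assoc, spow_mul_spow t n m]
    have : n + 1 + m + 1 = (n + m + 1) + 1 := by omega
    rw [this]
    rfl

theorem swelling_lemma
    {S : Type*} [Semigroup S] [TopologicalSpace S] [CompactSpace S] [T2Space S]
    [ContinuousMul S]
    (A : Set S) (hne : A.Nonempty) (hA : IsClosed A)
    (t : S) (ht : t ∈ A) (h : A ⊆ (fun a => t * a) '' A) :
    A = (fun a => t * a) '' A := by
  apply Set.Subset.antisymm h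
  rintro x ⟨a, ha, rfl⟩
  show t * a ∈ A
  have hAcomp : IsCompact A := hA.isCompact
  -- the closed subsemigroup generated by t
  set R : Set S := Set.range (spow t) with hR
  have hRmul : ∀ x ∈ R, ∀ y ∈ R, x * y ∈ R := by
    rintro _ ⟨n, rfl⟩ _ ⟨m, rfl⟩
    exact ⟨n + m + 1, (spow_mul_spow t n m).symm⟩
  set Γ : Set S := closure R with hΓ
  have hΓmul : ∀ x ∈ Γ, ∀ y ∈ Γ, x * y ∈ Γ := by
    intro x hx y hy
    exact (Subsemigroup.mk R (fun {a b} ha hb => hRmul a ha b hb)).topologicalClosure.mul_mem hx hy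
  have hΓcomp : IsCompact Γ := isClosed_closure.isCompact
  have hΓne : Γ.Nonempty := ⟨t, subset_closure ⟨0, rfl⟩⟩
  -- idempotent in Γ
  obtain ⟨e, heΓ, he⟩ := exists_idempotent_in_compact_subsemigroup
    (fun r => continuous_mul_right r) Γ hΓne hΓcomp hΓmul
  -- the set F b of elements s with b ∈ s • A is closed and contains all powers of t
  have hF : ∀ b ∈ A, Γ ⊆ {s : S | ∃ c ∈ A, s * c = b} := by
    intro b hb
    have hclosed : IsClosed {s : S | ∃ c ∈ A, s * c = b} := by
      have : {s : S | ∃ c ∈ A, s * c = b} =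
          Prod.fst '' ((Set.univ ×ˢ A) ∩ {p : S × S | p.1 * p.2 = b}) := by
        ext s
        constructor
        · rintro ⟨c, hc, hsc⟩
          exact ⟨(s, c), ⟨⟨trivial, hc⟩, hsc⟩, rfl⟩
        · rintro ⟨⟨s', c⟩, ⟨⟨-, hc⟩, hsc⟩, rfl⟩
          exact ⟨c, hc, hsc⟩
      rw [this]
      refine (((isCompact_univ.prod hAcomp).inter_right ?_).image continuous_fst).isClosed
      exact isClosed_singleton.preimage (continuous_fst.mul continuous_snd)
    apply closure_minimal _ hclosed
    rintro _ ⟨n, rfl⟩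
    induction n with
    | zero =>
      obtain ⟨c, hc, hcb⟩ := h hb
      exact ⟨c, hc, hcb⟩
    | succ n ih =>
      obtain ⟨c, hc, hcb⟩ := ih
      obtain ⟨d, hd, hdc⟩ := h hc
      refine ⟨d, hd, ?_⟩
      have : spow t (n + 1) = spow t n * spow t 0 := by
        rw [spow_mul_spow]
      have hdc' : t * d = c := hdc
      rw [this, mul_assoc]
      show spow t n * (t * d) = b
      rw [hdc', hcb]
  -- e ∈ t • Γ
  have he_mem : e ∈ (fun s => t * s) '' Γ := by
    have h1 : e ∈ closure ((fun s => t * s) '' R) := by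
      have hpair : (e, e) ∈ closure (R ×ˢ R) := by
        rw [closure_prod_eq]; exact ⟨heΓ, heΓ⟩
      have h2 : e ∈ closure ((fun p : S × S => p.1 * p.2) '' (R ×ˢ R)) := by
        have := image_closure_subset_closure_image
          (f := fun p : S × S => p.1 * p.2) (s := R ×ˢ R)
          (continuous_fst.mul continuous_snd)
        rw [← he]
        exact this ⟨(e, e), hpair, rfl⟩
      refine closure_mono ?_ h2
      rintro _ ⟨⟨x, y⟩, ⟨⟨n, rfl⟩, ⟨m, rfl⟩⟩, rfl⟩
      refine ⟨spow t (n + m), ⟨n + m, rfl⟩, ?_⟩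
      show t * spow t (n + m) = spow t n * spow t m
      rw [spow_mul_spow]; rfl
    have hclosed : IsClosed ((fun s => t * s) '' Γ) :=
      (hΓcomp.image (continuous_mul_left t)).isClosed
    exact closure_minimal (Set.image_mono subset_closure) hclosed h1
  obtain ⟨u, huΓ, htu0⟩ := he_mem
  have htu : t * u = e := htu0
  -- conclude
  obtain ⟨b, hb, hub⟩ := hF a ha huΓ
  obtain ⟨c, hc, hec⟩ := hF b hb heΓ
  have : t * a = b := by
    calc t * a = t * (u * b) := by rw [hub]
    _ = (t * u) * b := (mul_assoc _ _ _).symm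
    _ = e * b := by rw [htu]
    _ = e * (e * c) := by rw [hec]
    _ = (e * e) * c := (mul_assoc _ _ _).symm
    _ = e * c := by rw [he]
    _ = b := hec
  rw [this]; exact hb
end

section
/- If S and T are semigroups with T a regular subsemigroup of S, then Green's relation 𝓛 on T equals the restriction of Green's relation 𝓛 on S to T × T: for a, b ∈ T, Sa ∪ {a} = Sb ∪ {b} as subsets computed in T iff computed in S. -/
private lemma green_L_key {S : Type*} [Semigroup S] (P : S → Prop)
    (hmul : ∀ x, P x → ∀ y, P y → P (x * y)) {a b : S}
    (hab : a = b ∨ ∃ s, P s ∧ a = s * b) (hba : b = a ∨ ∃ s, P s ∧ b = s * a) :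
    insert a {x | ∃ s, P s ∧ x = s * a} = insert b {x | ∃ s, P s ∧ x = s * b} := by
  ext x
  simp only [Set.mem_insert_iff, Set.mem_setOf_eq]
  constructor
  · rintro (rfl | ⟨s, hs, rfl⟩)
    · rcases hab with rfl | ⟨s, hs, rfl⟩
      · exact Or.inl rfl
      · exact Or.inr ⟨s, hs, rfl⟩
    · rcases hab with rfl | ⟨t, ht, rfl⟩
      · exact Or.inr ⟨s, hs, rfl⟩
      · exact Or.inr ⟨s * t, hmul s hs t ht, (mul_assoc s t b).symm⟩
  · rintro (rfl | ⟨s, hs, rfl⟩)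
    · rcases hba with rfl | ⟨s, hs, rfl⟩
      · exact Or.inl rfl
      · exact Or.inr ⟨s, hs, rfl⟩
    · rcases hba with rfl | ⟨t, ht, rfl⟩
      · exact Or.inr ⟨s, hs, rfl⟩
      · exact Or.inr ⟨s * t, hmul s hs t ht, (mul_assoc s t a).symm⟩

theorem green_L_regular_subsemigroup
    {S : Type*} [Semigroup S] (T : Set S)
    (hT : ∀ x ∈ T, ∀ y ∈ T, x * y ∈ T)
    (hreg : ∀ t ∈ T, ∃ x ∈ T, t * x * t = t) :
    ∀ a ∈ T, ∀ b ∈ T,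
      ((insert a {x | ∃ s ∈ T, x = s * a} = insert b {x | ∃ s ∈ T, x = s * b}) ↔
       (insert a {x | ∃ s : S, x = s * a} = insert b {x | ∃ s : S, x = s * b})) := by
  intro a ha b hb
  have conv : ∀ c : S, {x | ∃ s : S, x = s * c} = {x | ∃ s, True ∧ x = s * c} := by
    intro c; ext x; simp
  constructor
  · intro h
    have hma : a ∈ insert b {x | ∃ s ∈ T, x = s * b} := h ▸ Set.mem_insert a _
    have hmb : b ∈ insert a {x | ∃ s ∈ T, x = s * a} := h.symm ▸ Set.mem_insert b _
    rw [conv a, conv b]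
    apply green_L_key (fun _ => True) (fun _ _ _ _ => trivial)
    · rcases hma with rfl | ⟨s, _, hx⟩
      · exact Or.inl rfl
      · exact Or.inr ⟨s, trivial, hx⟩
    · rcases hmb with rfl | ⟨s, _, hx⟩
      · exact Or.inl rfl
      · exact Or.inr ⟨s, trivial, hx⟩
  · intro h
    have hma : a ∈ insert b {x | ∃ s : S, x = s * b} := h ▸ Set.mem_insert a _
    have hmb : b ∈ insert a {x | ∃ s : S, x = s * a} := h.symm ▸ Set.mem_insert b _
    have upgrade : ∀ c ∈ T, ∀ d ∈ T, (c = d ∨ ∃ s : S, c = s * d) →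
        (c = d ∨ ∃ s, s ∈ T ∧ c = s * d) := by
      rintro c hc d hd (rfl | ⟨s, rfl⟩)
      · exact Or.inl rfl
      · obtain ⟨x, hx, hxd⟩ := hreg d hd
        refine Or.inr ⟨s * d * x, hT _ hc x hx, ?_⟩
        calc s * d = s * (d * x * d) := by rw [hxd]
          _ = s * d * x * d := by simp [mul_assoc]
    apply green_L_key (fun s => s ∈ T) (fun x hx y hy => hT x hx y hy)
    · exact upgrade a ha b hb (by simpa using hma)
    · exact upgrade b hb a ha (by simpa using hmb)
end

section
/- Every idempotent in a Rees matrix semigroup over a group is primitive: if e, f are idempotents of M(I, G, Λ, P) with ef = fe = f, then e = f. -/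
/-- Rees matrix multiplication on `I × G × Λ` with sandwich map `P`. -/
def reesMulM {G : Type*} [Group G] {I Λ : Type*} (P : Λ × I → G)
    (a b : I × G × Λ) : I × G × Λ :=
  (a.1, a.2.1 * P (a.2.2, b.1) * b.2.1, b.2.2)

theorem rees_matrix_idempotents_primitive
    {G : Type*} [Group G] {I Λ : Type*} [Nonempty I] [Nonempty Λ]
    (P : Λ × I → G) (e f : I × G × Λ)
    (he : reesMulM P e e = e) (hf : reesMulM P f f = f)
    (h1 : reesMulM P e f = f) (h2 : reesMulM P f e = f) :
    e = f := by
  obtain ⟨i, g, l⟩ := e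
  obtain ⟨j, h, m⟩ := f
  simp only [reesMulM, Prod.mk.injEq] at *
  obtain ⟨hi, _, _⟩ := h1
  obtain ⟨_, _, hm⟩ := h2
  subst hi hm
  obtain ⟨_, hg, _⟩ := he
  obtain ⟨_, hh, _⟩ := hf
  have : g = (P (l, i))⁻¹ := by
    have := mul_right_cancel (a := g * P (l, i)) (b := g) (c := 1) (by simpa using hg)
    exact eq_inv_of_mul_eq_one_left this
  have : h = (P (l, i))⁻¹ := by
    have := mul_right_cancel (a := h * P (l, i)) (b := h) (c := 1) (by simpa using hh)
    exact eq_inv_of_mul_eq_one_left this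
  aesop
end

section
/- If e is an idempotent of a semigroup S such that eSe is a group (with identity e), then eS is a minimal right ideal of S, provided S is simple. -/
theorem eS_minimal_right_ideal_of_simple
    {S : Type*} [Semigroup S]
    (hsimple : ∀ J : Set S, J.Nonempty →
      (∀ s : S, ∀ x ∈ J, s * x ∈ J ∧ x * s ∈ J) → J = Set.univ)
    (e : S) (he : e * e = e)
    (hgroup : ∀ x ∈ {z : S | ∃ s, z = e * s * e},
      ∃ y ∈ {z : S | ∃ s, z = e * s * e}, x * y = e ∧ y * x = e) :
    (∀ x ∈ {z : S | ∃ s, z = e * s}, ∀ t : S, x * t ∈ {z : S | ∃ s, z = e * s}) ∧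
    (∀ R : Set S, R.Nonempty → (∀ x ∈ R, ∀ t : S, x * t ∈ R) →
      R ⊆ {z : S | ∃ s, z = e * s} → R = {z : S | ∃ s, z = e * s}) := by
  have he2 : ∀ x : S, e * (e * x) = e * x := fun x => by rw [← mul_assoc, he]
  constructor
  · rintro x ⟨s, rfl⟩ t
    exact ⟨s * t, mul_assoc e s t⟩
  · rintro R ⟨r, hr⟩ hR hsub
    obtain ⟨s₀, hrs₀⟩ := hsub hr
    have her : e * r = r := by rw [hrs₀, ← mul_assoc, he]
    -- in the group eSe, A*B = e implies B*A = e
    have swap : ∀ A B : S, (∃ a, A = e * a * e) → (∃ b, B = e * b * e) →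
        A * B = e → B * A = e := by
      intro A B hA hB hAB
      obtain ⟨y, hy, hy1, hy2⟩ := hgroup A hA
      obtain ⟨y', hy'⟩ := hy
      have hye : y * e = y := by rw [hy']; simp only [mul_assoc, he]
      have heB : e * B = B := by obtain ⟨b, rfl⟩ := hB; simp only [mul_assoc, he2]
      have hBy : B = y := by rw [← heB, ← hy2, mul_assoc, hAB, hye]
      rw [hBy]; exact hy2
    -- key: if e = a * r * b then e ∈ R
    have key : ∀ a b : S, e = a * r * b → e ∈ R := by
      intro a b hab
      have hAB : (e * a * e) * (r * b * e) = e := by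
        have h1 : (e * a * e) * (r * b * e) = e * (a * r * b) * e := by
          rw [← her]; simp only [mul_assoc, he2]
        rw [h1, ← hab, he, he]
      have hBA : (r * b * e) * (e * a * e) = e :=
        swap _ _ ⟨a, rfl⟩ ⟨r * b, by rw [← her]; simp only [mul_assoc, he2]⟩ hAB
      have : r * (b * (e * (e * a * e))) = e := by
        calc r * (b * (e * (e * a * e))) = (r * b * e) * (e * a * e) := by
              simp only [mul_assoc]
          _ = e := hBA
      rw [← this]
      exact hR r hr _
    -- e ∈ R
    have heR : e ∈ R := by
      set J : Set S := {x | x = r ∨ (∃ a, x = a * r) ∨ (∃ a, x = r * a) ∨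
        (∃ a b, x = a * r * b)} with hJdef
      have hJ : J = Set.univ := by
        apply hsimple J ⟨r, Or.inl rfl⟩
        rintro s x (rfl | ⟨a, rfl⟩ | ⟨a, rfl⟩ | ⟨a, b, rfl⟩)
        · exact ⟨Or.inr (Or.inl ⟨s, rfl⟩), Or.inr (Or.inr (Or.inl ⟨s, rfl⟩))⟩
        · exact ⟨Or.inr (Or.inl ⟨s * a, by rw [mul_assoc]⟩),
            Or.inr (Or.inr (Or.inr ⟨a, s, rfl⟩))⟩
        · exact ⟨Or.inr (Or.inr (Or.inr ⟨s, a, by rw [mul_assoc]⟩)),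
            Or.inr (Or.inr (Or.inl ⟨a * s, by rw [mul_assoc]⟩))⟩
        · exact ⟨Or.inr (Or.inr (Or.inr ⟨s * a, b, by simp only [mul_assoc]⟩)),
            Or.inr (Or.inr (Or.inr ⟨a, b * s, by simp only [mul_assoc]⟩))⟩
      have heJ : e ∈ J := by rw [hJ]; trivial
      rcases heJ with h | ⟨a, h⟩ | ⟨a, h⟩ | ⟨a, b, h⟩
      · rwa [h]
      · -- e = a * r, hence e = a * r * e
        exact key a e (calc e = e * e := he.symm
          _ = a * r * e := by rw [← h])
      · rw [h]; exact hR r hr a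
      · exact key a b h
    ext x
    constructor
    · exact fun h => hsub h
    · rintro ⟨s, rfl⟩
      exact hR e heR s
end

section
/- In a compact Hausdorff topological semigroup S, for every idempotent e the set eSe is a compact topological group with identity e, provided S is simple. -/
private def rpowAux {S : Type*} [Mul S] (b : S) : ℕ → S
  | 0 => b
  | n + 1 => rpowAux b n * b

private def lpowAux {S : Type*} [Mul S] (a : S) : ℕ → S
  | 0 => a
  | n + 1 => a * lpowAux a n

private lemma rpowAux_succ' {S : Type*} [Semigroup S] (b : S) :
    ∀ n, rpowAux b (n + 1) = b * rpowAux b n := by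
  intro n
  induction n with
  | zero => rfl
  | succ n ih =>
    show rpowAux b (n + 1) * b = b * (rpowAux b n * b)
    rw [ih, mul_assoc]

private lemma rpowAux_add {S : Type*} [Semigroup S] (b : S) :
    ∀ p q, rpowAux b p * rpowAux b q = rpowAux b (p + q + 1) := by
  intro p q
  induction q with
  | zero => rfl
  | succ q ih =>
    show rpowAux b p * (rpowAux b q * b) = _
    rw [← mul_assoc, ih]
    rfl

private lemma lpow_mul_rpow {S : Type*} [Semigroup S] {e a b : S}
    (hab : a * b = e) (heb : e * b = b) :
    ∀ n, lpowAux a n * rpowAux b n = e := by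
  intro n
  induction n with
  | zero => exact hab
  | succ n ih =>
    show a * lpowAux a n * (rpowAux b n * b) = e
    rw [mul_assoc, ← mul_assoc (lpowAux a n), ih, heb, hab]

/-- Core lemma: in a closed "monoid-like" subset `G` of a compact Hausdorff topological
semigroup, a right inverse is a left inverse. -/
private lemma left_inv_of_right_inv {S : Type*} [Semigroup S] [TopologicalSpace S]
    [CompactSpace S] [T2Space S] [ContinuousMul S]
    {e : S} {G : Set S} (hGclosed : IsClosed G)
    (hid : ∀ x ∈ G, e * x = x ∧ x * e = x)
    (hmulG : ∀ x ∈ G, ∀ y ∈ G, x * y ∈ G)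
    {a b : S} (ha : a ∈ G) (hb : b ∈ G) (hab : a * b = e) : b * a = e := by
  have hjG : ∀ n, rpowAux b n ∈ G := by
    intro n
    induction n with
    | zero => exact hb
    | succ n ih =>
      show rpowAux b n * b ∈ G
      exact hmulG _ ih _ hb
  set f : ℕ → S := fun n => rpowAux b (n + 1) with hf
  set Γ : Set S := closure (Set.range f) with hΓ
  set K : Set S := closure (Set.range (rpowAux b)) with hK
  have hΓG : Γ ⊆ G :=
    closure_minimal (by rintro _ ⟨n, rfl⟩; exact hjG (n + 1)) hGclosed
  have hKG : K ⊆ G :=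
    closure_minimal (by rintro _ ⟨n, rfl⟩; exact hjG n) hGclosed
  have hΓcomp : IsCompact Γ := isClosed_closure.isCompact
  have hKcomp : IsCompact K := isClosed_closure.isCompact
  have hΓmul : ∀ x ∈ Γ, ∀ y ∈ Γ, x * y ∈ Γ := by
    intro x hx y hy
    refine map_mem_closure₂ continuous_mul hx hy ?_
    rintro _ ⟨m, rfl⟩ _ ⟨n, rfl⟩
    refine ⟨m + n + 2, ?_⟩
    show rpowAux b (m + n + 2 + 1) = rpowAux b (m + 1) * rpowAux b (n + 1)
    rw [rpowAux_add]
    congr 1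
    omega
  obtain ⟨h, hhΓ, hh⟩ := exists_idempotent_in_compact_subsemigroup
    (fun r => continuous_mul_right r) Γ ⟨f 0, subset_closure ⟨0, rfl⟩⟩ hΓcomp hΓmul
  -- h = e
  have hge := lpow_mul_rpow hab (hid b hb).1
  set p : ℕ → S × S := fun n => (lpowAux a (n + 1), f n) with hp
  have hFZ : closure (Set.range p) ⊆ {q : S × S | q.1 * q.2 = e} := by
    refine closure_minimal ?_ (isClosed_eq (continuous_fst.mul continuous_snd) continuous_const)
    rintro _ ⟨n, rfl⟩
    exact hge (n + 1)
  have hFcomp : IsCompact (closure (Set.range p)) := isClosed_closure.isCompact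
  have himg : Γ ⊆ Prod.snd '' closure (Set.range p) := by
    refine closure_minimal ?_ (hFcomp.image continuous_snd).isClosed
    rintro _ ⟨n, rfl⟩
    exact ⟨p n, subset_closure ⟨n, rfl⟩, rfl⟩
  obtain ⟨q, hqF, hq2⟩ := himg hhΓ
  have hq : q.1 * h = e := by
    have := hFZ hqF
    rwa [Set.mem_setOf_eq, hq2] at this
  have hhG : h ∈ G := hΓG hhΓ
  have heh : h = e := by
    calc h = e * h := ((hid h hhG).1).symm
    _ = q.1 * h * h := by rw [hq]
    _ = q.1 * (h * h) := mul_assoc _ _ _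
    _ = q.1 * h := by rw [hh]
    _ = e := hq
  have heΓ : e ∈ Γ := heh ▸ hhΓ
  -- e = b * c for some c ∈ K
  have hbK : Γ ⊆ (fun y => b * y) '' K := by
    refine closure_minimal ?_ (hKcomp.image (continuous_mul_left b)).isClosed
    rintro _ ⟨n, rfl⟩
    exact ⟨rpowAux b n, subset_closure ⟨n, rfl⟩, (rpowAux_succ' b n).symm⟩
  obtain ⟨c, hcK, hbc⟩ := hbK heΓ
  have hbc' : b * c = e := hbc
  have hcG : c ∈ G := hKG hcK
  have hac : a = c := by
    calc a = a * e := ((hid a ha).2).symm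
    _ = a * (b * c) := by rw [hbc']
    _ = a * b * c := (mul_assoc _ _ _).symm
    _ = e * c := by rw [hab]
    _ = c := (hid c hcG).1
  rw [hac]; exact hbc'

theorem eSe_compact_topological_group_of_simple
    {S : Type*} [Semigroup S] [TopologicalSpace S] [CompactSpace S] [T2Space S]
    [ContinuousMul S]
    (hsimple : ∀ J : Set S, J.Nonempty →
      (∀ s : S, ∀ x ∈ J, s * x ∈ J ∧ x * s ∈ J) → J = Set.univ)
    (e : S) (he : e * e = e) :
    IsCompact {z : S | ∃ s, z = e * s * e} ∧
    (∀ x ∈ {z : S | ∃ s, z = e * s * e}, ∀ y ∈ {z : S | ∃ s, z = e * s * e},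
      x * y ∈ {z : S | ∃ s, z = e * s * e}) ∧
    (∀ x ∈ {z : S | ∃ s, z = e * s * e}, e * x = x ∧ x * e = x) ∧
    ∃ inv : {z : S | ∃ s, z = e * s * e} → {z : S | ∃ s, z = e * s * e},
      (∀ x, x.1 * (inv x).1 = e ∧ (inv x).1 * x.1 = e) ∧ Continuous inv := by
  set G : Set S := {z : S | ∃ s, z = e * s * e} with hGdef
  have hee : ∀ t : S, e * (e * t) = e * t := fun t => by rw [← mul_assoc, he]
  have hrange : G = Set.range (fun s => e * s * e) := by
    ext z; constructor
    · rintro ⟨s, rfl⟩; exact ⟨s, rfl⟩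
    · rintro ⟨s, rfl⟩; exact ⟨s, rfl⟩
  have hcomp : IsCompact G := by
    rw [hrange]
    exact isCompact_range (by continuity)
  have hclosed : IsClosed G := hcomp.isClosed
  have hid : ∀ x ∈ G, e * x = x ∧ x * e = x := by
    rintro _ ⟨s, rfl⟩
    constructor
    · rw [← mul_assoc, ← mul_assoc, he]
    · rw [mul_assoc, he]
  have hmulG : ∀ x ∈ G, ∀ y ∈ G, x * y ∈ G := by
    rintro _ ⟨s, rfl⟩ _ ⟨t, rfl⟩
    exact ⟨s * (e * (e * t)), by simp [mul_assoc]⟩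
  -- existence of inverses
  have hinv : ∀ x ∈ G, ∃ y ∈ G, x * y = e ∧ y * x = e := by
    intro x hxG
    obtain ⟨s, hs⟩ := id hxG
    -- the two-sided ideal generated by x
    have hJ : {z : S | ∃ p q, z = p * x * q} = Set.univ := by
      refine hsimple _ ⟨x * x * x, x, x, rfl⟩ ?_
      rintro t _ ⟨p, q, rfl⟩
      exact ⟨⟨t * p, q, by simp [mul_assoc]⟩, ⟨p, q * t, by simp [mul_assoc]⟩⟩
    have heJ : e ∈ {z : S | ∃ p q, z = p * x * q} := by rw [hJ]; trivial
    obtain ⟨p, q, hpq⟩ := heJ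
    set u : S := e * p * e with hu
    set v : S := e * q * e with hv
    have huG : u ∈ G := ⟨p, rfl⟩
    have hvG : v ∈ G := ⟨q, rfl⟩
    have huxv : u * (x * v) = e := by
      have h1 : u * (x * v) = e * (p * x * q) * e := by
        rw [hs, hu, hv]
        simp only [mul_assoc]
        rw [hee, hee]
      rw [h1, ← hpq, he, he]
    have hxvG : x * v ∈ G := hmulG x hxG v hvG
    have hxvu : (x * v) * u = e := left_inv_of_right_inv hclosed hid hmulG huG hxvG huxv
    have hvuG : v * u ∈ G := hmulG v hvG u huG
    have hxvu' : x * (v * u) = e := by rw [← mul_assoc]; exact hxvu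
    have hvux : (v * u) * x = e := left_inv_of_right_inv hclosed hid hmulG hxG hvuG hxvu'
    exact ⟨v * u, hvuG, hxvu', hvux⟩
  -- uniqueness of inverses
  have huniq : ∀ x ∈ G, ∀ y ∈ G, ∀ y' ∈ G,
      x * y = e → y * x = e → x * y' = e → y' * x = e → y = y' := by
    intro x _ y hyG y' hy'G _ hyx hxy' _
    calc y = y * e := ((hid y hyG).2).symm
    _ = y * (x * y') := by rw [hxy']
    _ = y * x * y' := (mul_assoc _ _ _).symm
    _ = e * y' := by rw [hyx]
    _ = y' := (hid y' hy'G).1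
  haveI : CompactSpace ↥G := isCompact_iff_compactSpace.mp hcomp
  have hinv' : ∀ x : ↥G, ∃ y : ↥G, x.1 * y.1 = e ∧ y.1 * x.1 = e := by
    intro ⟨x, hx⟩
    obtain ⟨y, hyG, h1, h2⟩ := hinv x hx
    exact ⟨⟨y, hyG⟩, h1, h2⟩
  refine ⟨hcomp, hmulG, hid, fun x => Classical.choose (hinv' x),
    fun x => Classical.choose_spec (hinv' x), ?_⟩
  set inv : ↥G → ↥G := fun x => Classical.choose (hinv' x) with hinvdef
  have hinvspec : ∀ x : ↥G, x.1 * (inv x).1 = e ∧ (inv x).1 * x.1 = e :=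
    fun x => Classical.choose_spec (hinv' x)
  rw [continuous_iff_isClosed]
  intro C hC
  have hkey : inv ⁻¹' C =
      Prod.fst '' {z : ↥G × ↥G | z.1.1 * z.2.1 = e ∧ z.2 ∈ C} := by
    ext x
    constructor
    · intro hx
      exact ⟨(x, inv x), ⟨(hinvspec x).1, hx⟩, rfl⟩
    · rintro ⟨⟨x', y⟩, ⟨h1, h2⟩, rfl⟩
      have h1' : y.1 * x'.1 = e :=
        left_inv_of_right_inv hclosed hid hmulG x'.2 y.2 h1
      have : (inv x') = y :=
        Subtype.ext (huniq x'.1 x'.2 (inv x').1 (inv x').2 y.1 y.2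
          (hinvspec x').1 (hinvspec x').2 h1 h1')
      show inv x' ∈ C
      rw [this]; exact h2
  rw [hkey]
  refine isClosedMap_fst_of_compactSpace _ ?_
  refine IsClosed.inter ?_ (hC.preimage continuous_snd)
  exact isClosed_eq
    ((continuous_subtype_val.comp continuous_fst).mul
      (continuous_subtype_val.comp continuous_snd)) continuous_const
end
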